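/- Let N ≥ 2 and let mu = (mu_1, ..., mu_{N-1}) be positive reals, with the convention mu_0 = mu_N = 0. Then C(mu) := (sum_{i=1}^{N} (mu_i - mu_{i-1})^2)^{-1} * exp((2/(N-1)) * sum_{i=1}^{N-1} log(mu_i)) satisfies C(mu) ≤ 1/(lambda_1 (N-1)), where lambda_1 = 4 sin^2(pi/(2N)). -/

import Mathlib

open Finset Real

private lemma ptwise_aux (a b u v : ℝ) (hu : 0 < u) (hv : 0 < v) :
    (1 - u/v) * a^2 + (1 - v/u) * b^2 ≤ (a - b)^2 := by
  have h := sq_nonneg (u*a - v*b)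
  have h2 : (0:ℝ) < u * v := mul_pos hu hv
  have key : (1 - u/v) * a^2 + (1 - v/u) * b^2 = (a-b)^2 - (u*a - v*b)^2 / (u*v) := by
    field_simp; ring
  rw [key]
  have : 0 ≤ (u*a - v*b)^2 / (u*v) := by positivity
  linarith

/-- The trig recurrence: sin(jθ) + sin((j+2)θ) = 2 sin((j+1)θ) cos θ. -/
private lemma trig_rec (j : ℕ) (θ : ℝ) :
    Real.sin (j * θ) + Real.sin ((j + 2 : ℕ) * θ) = 2 * Real.sin ((j + 1 : ℕ) * θ) * Real.cos θ := by
  push_cast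
  have h1 : ((j : ℝ) * θ) = ((j:ℝ)+1) * θ - θ := by ring
  have h2 : (((j:ℝ) + 2) * θ) = ((j:ℝ)+1) * θ + θ := by ring
  rw [h1, h2, Real.sin_sub, Real.sin_add]
  ring

theorem stmt_6 (N : ℕ) (hN : 2 ≤ N) (μ : ℕ → ℝ)
    (hpos : ∀ i, 1 ≤ i → i ≤ N - 1 → 0 < μ i)
    (h0 : μ 0 = 0) (hNz : μ N = 0) :
    (∑ i ∈ Finset.Icc 1 N, (μ i - μ (i - 1)) ^ 2)⁻¹ *
        Real.exp ((2 / ((N : ℝ) - 1)) * ∑ i ∈ Finset.Icc 1 (N - 1), Real.log (μ i)) ≤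
      1 / (4 * Real.sin (Real.pi / (2 * N)) ^ 2 * ((N : ℝ) - 1)) := by
  set θ : ℝ := Real.pi / N with hθ
  have hNpos : (0:ℝ) < N := by positivity
  have hθpos : 0 < θ := by positivity
  set lam : ℝ := 4 * Real.sin (Real.pi / (2 * N)) ^ 2 with hlam
  -- lam = 2 - 2 cos θ
  have hlam_eq : lam = 2 - 2 * Real.cos θ := by
    have h2 : Real.pi / N = 2 * (Real.pi / (2 * N)) := by ring
    have := Real.cos_two_mul (Real.pi / (2 * N))
    have hs := Real.sin_sq_add_cos_sq (Real.pi / (2 * N))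
    rw [hlam, hθ, h2, this]
    nlinarith [hs]
  have hlam_pos : 0 < lam := by
    have h1 : 0 < Real.pi / (2 * N) := by positivity
    have h2 : Real.pi / (2 * N) < Real.pi := by
      have hc : (2:ℝ) ≤ N := by exact_mod_cast hN
      have h3 : (1:ℝ) < 2 * N := by nlinarith
      calc Real.pi / (2 * N) < Real.pi / 1 :=
            div_lt_div_of_pos_left Real.pi_pos one_pos h3
        _ = Real.pi := div_one _
    have := Real.sin_pos_of_pos_of_lt_pi h1 h2
    positivity
  set s : ℕ → ℝ := fun k => Real.sin (k * θ) with hs_def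
  have hs0 : s 0 = 0 := by simp [hs_def]
  have hsN : s N = 0 := by
    have : (N:ℝ) * θ = Real.pi := by
      rw [hθ]; field_simp
    simp [hs_def, this]
  have hs_pos : ∀ k, 1 ≤ k → k ≤ N - 1 → 0 < s k := by
    intro k hk1 hk2
    apply Real.sin_pos_of_pos_of_lt_pi
    · positivity
    · have hkN : (k:ℝ) < N := by exact_mod_cast (by omega : k < N)
      have : (k:ℝ) * θ < (N:ℝ) * θ := by
        exact mul_lt_mul_of_pos_right hkN hθpos
      calc (k:ℝ) * θ < (N:ℝ) * θ := this
        _ = Real.pi := by rw [hθ]; field_simp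
  obtain ⟨n, rfl⟩ : ∃ n, N = n + 2 := ⟨N - 2, by omega⟩
  have hsub : (n + 2) - 1 = n + 1 := by omega
  rw [hsub] at hpos ⊢
  set Q : ℝ := ∑ i ∈ Finset.Icc 1 (n+1), μ i ^ 2 with hQ
  set S : ℝ := ∑ i ∈ Finset.Icc 1 (n+2), (μ i - μ (i-1)) ^ 2 with hS
  -- Discrete Poincaré inequality: lam * Q ≤ S
  have poincare : lam * Q ≤ S := by
    have key : ∀ i ∈ Finset.Icc 1 (n+2),
        (1 - s (i-1) / s i) * μ i ^ 2 + (1 - s i / s (i-1)) * μ (i-1) ^ 2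
          ≤ (μ i - μ (i-1)) ^ 2 := by
      intro i hi
      simp only [Finset.mem_Icc] at hi
      rcases eq_or_lt_of_le hi.1 with h1 | h1
      · -- i = 1
        rw [← h1]
        simp [hs0, h0]
      · rcases eq_or_lt_of_le hi.2 with h2 | h2
        · -- i = n + 2
          rw [h2]
          have : (n + 2) - 1 = n + 1 := by omega
          rw [this]
          simp [hsN, hNz]
        · -- 2 ≤ i ≤ n+1
          exact ptwise_aux _ _ _ _ (hs_pos (i-1) (by omega) (by omega))
            (hs_pos i (by omega) (by omega))
    have hsum := Finset.sum_le_sum key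
    refine le_trans ?_ hsum
    -- compute the sum exactly
    have hA : ∑ i ∈ Finset.Icc 1 (n+2), (1 - s (i-1) / s i) * μ i ^ 2
        = ∑ j ∈ Finset.range (n+1), (1 - s j / s (j+1)) * μ (j+1) ^ 2 := by
      rw [Finset.sum_Icc_succ_top (by omega : 1 ≤ n + 1 + 1)]
      have hz : (1 - s (n+1+1-1) / s (n+1+1)) * μ (n+1+1) ^ 2 = 0 := by
        rw [show n+1+1 = n+2 from rfl, hNz]; ring
      rw [hz, add_zero,
        show Finset.Icc 1 (n+1) = Finset.Ico 1 (n+2) from rfl,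
        Finset.sum_Ico_eq_sum_range]
      apply Finset.sum_congr rfl
      intro x _
      have e1 : 1 + x - 1 = x := by omega
      have e2 : 1 + x = x + 1 := by omega
      rw [e1, e2]
    have hB : ∑ i ∈ Finset.Icc 1 (n+2), (1 - s i / s (i-1)) * μ (i-1) ^ 2
        = ∑ j ∈ Finset.range (n+1), (1 - s (j+2) / s (j+1)) * μ (j+1) ^ 2 := by
      rw [show Finset.Icc 1 (n+2) = Finset.Ico 1 (n+3) from rfl]
      rw [Finset.sum_Ico_eq_sum_range]
      have : n + 3 - 1 = (n+1) + 1 := by omega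
      rw [this, Finset.sum_range_succ']
      simp only [Nat.add_sub_cancel, h0]
      simp [add_comm, add_assoc, add_left_comm]
    have combine : ∑ i ∈ Finset.Icc 1 (n+2),
        ((1 - s (i-1) / s i) * μ i ^ 2 + (1 - s i / s (i-1)) * μ (i-1) ^ 2)
        = lam * Q := by
      rw [Finset.sum_add_distrib, hA, hB, ← Finset.sum_add_distrib]
      have hQ' : Q = ∑ j ∈ Finset.range (n+1), μ (j+1) ^ 2 := by
        rw [hQ, show Finset.Icc 1 (n+1) = Finset.Ico 1 (n+2) from rfl,
          Finset.sum_Ico_eq_sum_range]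
        simp [add_comm]
      rw [hQ', Finset.mul_sum]
      apply Finset.sum_congr rfl
      intro j hj
      simp only [Finset.mem_range] at hj
      have hsj : 0 < s (j+1) := hs_pos (j+1) (by omega) (by omega)
      have htr : s j + s (j+2) = 2 * s (j+1) * Real.cos θ := by
        have := trig_rec j θ
        simpa [hs_def] using this
      have hm : (1 - s j / s (j+1)) * μ (j+1) ^ 2 + (1 - s (j+2) / s (j+1)) * μ (j+1) ^ 2
          = (2 - (s j + s (j+2)) / s (j+1)) * μ (j+1) ^ 2 := by ring
      rw [hm, htr, hlam_eq,
        show 2 * s (j+1) * Real.cos θ = s (j+1) * (2 * Real.cos θ) from by ring,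
        mul_div_cancel_left₀ _ hsj.ne']
    rw [← combine]
  have hcast : ((n+2:ℕ):ℝ) - 1 = (n:ℝ) + 1 := by push_cast; ring
  rw [hcast]
  set w : ℝ := 1 / ((n:ℝ) + 1) with hw
  -- AM-GM
  have hcard : (Finset.Icc 1 (n+1)).card = n + 1 := by
    rw [Nat.card_Icc]; omega
  have hwsum : ∑ _i ∈ Finset.Icc 1 (n+1), w = 1 := by
    rw [Finset.sum_const, hcard, nsmul_eq_mul, hw]
    push_cast
    field_simp
  have amgm := Real.geom_mean_le_arith_mean_weighted (Finset.Icc 1 (n+1))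
    (fun _ => w) (fun i => μ i ^ 2)
    (fun i _ => by positivity) hwsum (fun i _ => by positivity)
  have hGeq : ∏ i ∈ Finset.Icc 1 (n+1), (μ i ^ 2) ^ w
      = Real.exp ((2 / ((n:ℝ) + 1)) * ∑ i ∈ Finset.Icc 1 (n+1), Real.log (μ i)) := by
    have step : ∀ i ∈ Finset.Icc 1 (n+1),
        (μ i ^ 2) ^ w = Real.exp (w * (2 * Real.log (μ i))) := by
      intro i hi
      simp only [Finset.mem_Icc] at hi
      have h := hpos i hi.1 hi.2
      rw [Real.rpow_def_of_pos (by positivity : (0:ℝ) < μ i ^ 2)]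
      congr 1
      rw [Real.log_pow]
      push_cast
      ring
    rw [Finset.prod_congr rfl step, ← Real.exp_sum]
    congr 1
    rw [Finset.mul_sum]
    apply Finset.sum_congr rfl
    intro i _
    rw [hw]
    ring
  rw [← hGeq]
  have hQpos : 0 < Q := by
    apply Finset.sum_pos
    · intro i hi
      simp only [Finset.mem_Icc] at hi
      have := hpos i hi.1 hi.2
      positivity
    · exact ⟨1, by simp⟩
  have hSpos : 0 < S := lt_of_lt_of_le (by positivity) poincare
  have hwpos : 0 < w := by rw [hw]; positivity
  have hQle : Q ≤ S / lam := by
    rw [le_div_iff₀ hlam_pos, mul_comm]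
    exact poincare
  have hG : ∏ i ∈ Finset.Icc 1 (n+1), (μ i ^ 2) ^ w ≤ w * (S / lam) := by
    refine le_trans amgm ?_
    rw [← Finset.mul_sum, ← hQ]
    exact mul_le_mul_of_nonneg_left hQle hwpos.le
  calc S⁻¹ * ∏ i ∈ Finset.Icc 1 (n+1), (μ i ^ 2) ^ w
      ≤ S⁻¹ * (w * (S / lam)) :=
        mul_le_mul_of_nonneg_left hG (inv_nonneg.2 hSpos.le)
    _ = 1 / (lam * ((n:ℝ) + 1)) := by
        rw [hw]
        field_simp
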